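/- Let D be a doubly partial order on a finite set V ⊆ ℝ², and let u, v ∈ V be distinct vertices each having a nonempty out-neighborhood (i.e., there exist a, b ∈ V with a ≺ u and b ≺ v). Then u and v are adjacent in the phylogeny graph of D if and only if u and v have a common prey in D, i.e., there exists z ∈ V with z ≺ u and z ≺ v. -/

import Mathlib

/-- `prec x y` means `x₁ < y₁` and `x₂ < y₂`, written `x ≺ y`. -/
def prec (x y : ℝ × ℝ) : Prop := x.1 < y.1 ∧ x.2 < y.2

/-- The phylogeny graph of the doubly partial order on a finite set
`V ⊆ ℝ²` (arcs `(x,v)` exactly when `v ≺ x`). -/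
def phylogenyGraph (V : Finset (ℝ × ℝ)) : SimpleGraph {p : ℝ × ℝ // p ∈ V} where
  Adj u v := u ≠ v ∧
    (prec u.1 v.1 ∨ prec v.1 u.1 ∨ ∃ z ∈ V, prec z u.1 ∧ prec z v.1)
  symm := by
    constructor
    intro u v h
    exact ⟨Ne.symm h.1, by tauto⟩
  loopless := by
    constructor
    intro u h
    exact h.1 rfl

/-- If distinct vertices `u` and `v` of a doubly partial order each have a
nonempty out-neighborhood, then `u` and `v` are adjacent in the phylogeny
graph iff they have a common prey. -/
theorem phylogeny_adj_iff_common_prey (V : Finset (ℝ × ℝ)) (u v : ℝ × ℝ)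
    (hu : u ∈ V) (hv : v ∈ V) (huv : u ≠ v)
    (ha : ∃ a ∈ V, prec a u) (hb : ∃ b ∈ V, prec b v) :
    (phylogenyGraph V).Adj ⟨u, hu⟩ ⟨v, hv⟩ ↔ ∃ z ∈ V, prec z u ∧ prec z v := by
  constructor
  · rintro ⟨-, h | h | h⟩
    · obtain ⟨a, haV, hau⟩ := ha
      exact ⟨a, haV, hau, ⟨hau.1.trans h.1, hau.2.trans h.2⟩⟩
    · obtain ⟨b, hbV, hbv⟩ := hb
      exact ⟨b, hbV, ⟨hbv.1.trans h.1, hbv.2.trans h.2⟩, hbv⟩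
    · exact h
  · intro h
    exact ⟨by simpa using huv, Or.inr (Or.inr h)⟩
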